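/- Let Z be a compact Hausdorff space and h_1, …, h_k : Z → Z pairwise commuting surjective local homeomorphisms, with β_{c_i} := limsup_{j→∞} j^{-1} ln( max_{z∈Z} |h_i^{-j}(z)| ), and assume β_{c_i} > 0 for all i. Set r := (β_{c_1}, …, β_{c_k}), and suppose u ∈ Z satisfies |h_1^{-d}(u)| ≥ e^{d β_{c_1}} for every d ∈ ℕ. Then for every β > 1, the sum f_β(u) := Σ_{n∈ℕ^k} e^{-β r·n} |h^{-n}(u)| (taken in [0,∞]) satisfies f_β(u) ≥ (1 − e^{(1−β) β_{c_1}})^{-1} · Π_{i=2}^k (1 − e^{-β β_{c_i}})^{-1}. Consequently f_β(u) → ∞ as β decreases to 1. -/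

import Mathlib

open Filter Function

/-- `h^m = h 0 ^[m 0] ∘ ⋯ ∘ h (k-1) ^[m (k-1)]`. -/
def compIter {Z : Type*} {k : ℕ} (h : Fin k → Z → Z) (m : Fin k → ℕ) : Z → Z :=
  (List.ofFn fun i => (h i)^[m i]).foldr (· ∘ ·) id

/-- The critical inverse temperature
`β_c = limsup_{j→∞} j⁻¹ ln (max_z |f^{-j}(z)|)` of a map `f : Z → Z`. -/
noncomputable def betaC {Z : Type*} (f : Z → Z) : ℝ :=
  Filter.limsup
    (fun j : ℕ => Real.log (⨆ z : Z, (Nat.card ((f^[j]) ⁻¹' {z}) : ℝ)) / j)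
    Filter.atTop

lemma fiber_finite {Z : Type*} [TopologicalSpace Z] [CompactSpace Z] [T2Space Z]
    {f : Z → Z} (hf : IsLocalHomeomorph f) (u : Z) : (f ⁻¹' {u}).Finite := by
  set s := f ⁻¹' {u} with hs
  have hcomp : IsCompact s := (isClosed_singleton.preimage hf.continuous).isCompact
  choose U hUo hxU hinj using hf.isLocallyInjective
  obtain ⟨t, hts, htf, hcover⟩ := hcomp.elim_finite_subcover_image
    (fun x (_ : x ∈ s) => hUo x) (fun y hy => Set.mem_iUnion₂.2 ⟨y, hy, hxU y⟩)
  refine htf.subset fun y hy => ?_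
  obtain ⟨x, hxt, hyU⟩ := Set.mem_iUnion₂.1 (hcover hy)
  have hxs : x ∈ s := hts hxt
  have : y = x := hinj x hyU (hxU x) (by simp only [hs, Set.mem_preimage, Set.mem_singleton_iff] at hy hxs; rw [hy, hxs])
  exact this ▸ hxt

lemma foldr_surj {Z : Type*} (L : List (Z → Z)) (hL : ∀ f ∈ L, Surjective f) :
    Surjective (L.foldr (· ∘ ·) id) := by
  induction L with
  | nil => exact surjective_id
  | cons a L ih =>
    exact (hL a (by simp)).comp (ih fun f hf => hL f (List.mem_cons_of_mem _ hf))

lemma foldr_lh {Z : Type*} [TopologicalSpace Z] (L : List (Z → Z))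
    (hL : ∀ f ∈ L, IsLocalHomeomorph f) :
    IsLocalHomeomorph (L.foldr (· ∘ ·) id) := by
  induction L with
  | nil => simpa using (Homeomorph.refl Z).isLocalHomeomorph
  | cons a L ih =>
    exact (hL a (by simp)).comp (ih fun f hf => hL f (List.mem_cons_of_mem _ hf))

lemma iterate_lh {Z : Type*} [TopologicalSpace Z] {f : Z → Z}
    (hf : IsLocalHomeomorph f) (n : ℕ) : IsLocalHomeomorph f^[n] := by
  induction n with
  | zero => simpa using (Homeomorph.refl Z).isLocalHomeomorph
  | succ n ih => rw [Function.iterate_succ]; exact ih.comp hf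

lemma card_fiber_le {Z : Type*} {f g : Z → Z} (hg : Surjective g) (u : Z)
    (hfin : ((f ∘ g) ⁻¹' {u}).Finite) :
    Nat.card (f ⁻¹' {u}) ≤ Nat.card ((f ∘ g) ⁻¹' {u}) := by
  haveI := hfin.to_subtype
  refine Nat.card_le_card_of_surjective
    (fun x : ((f ∘ g) ⁻¹' {u}) => (⟨g x.1, x.2⟩ : (f ⁻¹' {u}))) ?_
  rintro ⟨a, ha⟩
  obtain ⟨x, rfl⟩ := hg a
  exact ⟨⟨x, ha⟩, rfl⟩

lemma tsum_pi_prod : ∀ {k : ℕ} (g : Fin k → ℕ → ENNReal),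
    (∑' n : Fin k → ℕ, ∏ i, g i (n i)) = ∏ i, ∑' j, g i j := by
  intro k
  induction k with
  | zero =>
    intro g
    rw [tsum_eq_single (fun i => i.elim0) (fun b hb => absurd (Subsingleton.elim b _) hb)]
    simp
  | succ k ih =>
    intro g
    rw [← (Fin.consEquiv fun _ : Fin (k+1) => ℕ).tsum_eq, ENNReal.tsum_prod']
    simp only [Fin.consEquiv_apply, Fin.prod_univ_succ, Fin.cons_zero, Fin.cons_succ]
    calc (∑' (a : ℕ) (m : Fin k → ℕ), g 0 a * ∏ i, g i.succ (m i))
        = ∑' (a : ℕ), g 0 a * ∑' m : Fin k → ℕ, ∏ i, g i.succ (m i) := by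
          congr 1; ext a; exact ENNReal.tsum_mul_left
      _ = (∑' a, g 0 a) * ∑' m : Fin k → ℕ, ∏ i, g i.succ (m i) := ENNReal.tsum_mul_right
      _ = (∑' a, g 0 a) * ∏ i : Fin k, ∑' j, g i.succ j := by rw [ih]

/-- for the preferred dynamics `r = (β_{c 1}, …, β_{c k})` and a point
`u` with `|h_1^{-d}(u)| ≥ e^{d β_{c 1}}` for all `d`, the sum
`f_β(u) = ∑_{n ∈ ℕ^k} e^{-β r·n} |h^{-n}(u)|` (in `[0,∞]`) is bounded below by
`(1 - e^{(1-β)β_{c 1}})⁻¹ ∏_{i≥2} (1 - e^{-β β_{c i}})⁻¹`, and hence tends to `∞`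
as `β ↓ 1`. -/
theorem fbeta_tendsto_top {Z : Type*} [TopologicalSpace Z] [CompactSpace Z] [T2Space Z]
    {k : ℕ} [NeZero k] (h : Fin k → Z → Z)
    (hlh : ∀ i, IsLocalHomeomorph (h i))
    (hsurj : ∀ i, Function.Surjective (h i))
    (hcomm : ∀ i j : Fin k, (h i) ∘ (h j) = (h j) ∘ (h i))
    (hpos : ∀ i, 0 < betaC (h i))
    (u : Z)
    (hu : ∀ d : ℕ, Real.exp (d * betaC (h 0)) ≤ (Nat.card ((h 0)^[d] ⁻¹' {u}) : ℝ)) :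
    (∀ β : ℝ, 1 < β →
      ENNReal.ofReal
          ((1 - Real.exp ((1 - β) * betaC (h 0)))⁻¹ *
            ∏ i ∈ Finset.univ.erase (0 : Fin k),
              (1 - Real.exp (-(β * betaC (h i))))⁻¹)
        ≤ ∑' n : Fin k → ℕ,
            ENNReal.ofReal
              (Real.exp (-(β * ∑ i, betaC (h i) * n i)) *
                (Nat.card ((compIter h n) ⁻¹' {u}) : ℝ))) ∧
    Filter.Tendsto
      (fun β : ℝ =>
        ∑' n : Fin k → ℕ,
          ENNReal.ofReal
            (Real.exp (-(β * ∑ i, betaC (h i) * n i)) *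
              (Nat.card ((compIter h n) ⁻¹' {u}) : ℝ)))
      (nhdsWithin 1 (Set.Ioi 1)) (nhds ⊤) := by
  obtain ⟨k', rfl⟩ : ∃ m, k = m + 1 := Nat.exists_eq_succ_of_ne_zero (NeZero.ne k)
  -- key cardinality bound
  have key : ∀ (n : Fin (k' + 1) → ℕ),
      Real.exp ((n 0 : ℝ) * betaC (h 0)) ≤ (Nat.card ((compIter h n) ⁻¹' {u}) : ℝ) := by
    intro n
    set g : Z → Z := (List.ofFn fun i : Fin k' => (h i.succ)^[n i.succ]).foldr (· ∘ ·) id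
      with hgdef
    have hdecomp : compIter h n = (h 0)^[n 0] ∘ g := by
      rw [compIter, List.ofFn_succ, List.foldr_cons]
    have hgsurj : Function.Surjective g := by
      apply foldr_surj
      intro f hf
      simp only [List.mem_ofFn] at hf
      obtain ⟨i, rfl⟩ := hf
      exact Function.Surjective.iterate (hsurj _) _
    have hlhC : IsLocalHomeomorph (compIter h n) := by
      rw [compIter]
      apply foldr_lh
      intro f hf
      simp only [List.mem_ofFn] at hf
      obtain ⟨i, rfl⟩ := hf
      exact iterate_lh (hlh _) _
    have hfin : ((compIter h n) ⁻¹' {u}).Finite := fiber_finite hlhC u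
    rw [hdecomp] at hfin
    have h1 : Nat.card ((h 0)^[n 0] ⁻¹' {u}) ≤ Nat.card ((compIter h n) ⁻¹' {u}) := by
      rw [hdecomp]
      exact card_fiber_le hgsurj u hfin
    calc Real.exp ((n 0 : ℝ) * betaC (h 0)) ≤ (Nat.card ((h 0)^[n 0] ⁻¹' {u}) : ℝ) := hu (n 0)
      _ ≤ _ := Nat.cast_le.2 h1
  have main : ∀ β : ℝ, 1 < β →
      ENNReal.ofReal
          ((1 - Real.exp ((1 - β) * betaC (h 0)))⁻¹ *
            ∏ i ∈ Finset.univ.erase (0 : Fin (k' + 1)),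
              (1 - Real.exp (-(β * betaC (h i))))⁻¹)
        ≤ ∑' n : Fin (k' + 1) → ℕ,
            ENNReal.ofReal
              (Real.exp (-(β * ∑ i, betaC (h i) * n i)) *
                (Nat.card ((compIter h n) ⁻¹' {u}) : ℝ)) := by
    intro β hβ
    set c : Fin (k' + 1) → ℝ :=
      fun i => if i = 0 then (1 - β) * betaC (h 0) else -(β * betaC (h i)) with hc
    have hβ0 : (0 : ℝ) < β := lt_trans one_pos hβ
    have hcneg : ∀ i, c i < 0 := by
      intro i
      by_cases hi : i = 0
      · subst hi; simp only [hc, if_pos rfl]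
        exact mul_neg_of_neg_of_pos (by linarith) (hpos 0)
      · simp only [hc, if_neg hi]
        exact neg_neg_iff_pos.2 (mul_pos hβ0 (hpos i))
    have hsub : ∀ i, 0 < 1 - Real.exp (c i) := fun i =>
      sub_pos.2 (Real.exp_lt_one_iff.2 (hcneg i))
    -- termwise lower bound
    have hterm : ∀ n : Fin (k' + 1) → ℕ,
        (∏ i, (ENNReal.ofReal (Real.exp (c i))) ^ (n i))
          ≤ ENNReal.ofReal
              (Real.exp (-(β * ∑ i, betaC (h i) * n i)) *
                (Nat.card ((compIter h n) ⁻¹' {u}) : ℝ)) := by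
      intro n
      have h1 : (∏ i, (ENNReal.ofReal (Real.exp (c i))) ^ (n i))
          = ENNReal.ofReal (Real.exp (∑ i, (n i : ℝ) * c i)) := by
        rw [Real.exp_sum, ENNReal.ofReal_prod_of_nonneg (fun i _ => (Real.exp_nonneg _))]
        refine Finset.prod_congr rfl fun i _ => ?_
        rw [Real.exp_nat_mul, ENNReal.ofReal_pow (Real.exp_nonneg _)]
      have h2 : (∑ i, (n i : ℝ) * c i)
          = -(β * ∑ i, betaC (h i) * (n i : ℝ)) + (n 0 : ℝ) * betaC (h 0) := by
        have e1 : ∀ i : Fin (k' + 1), (n i : ℝ) * c i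
            = (if i = 0 then (n 0 : ℝ) * betaC (h 0) else 0) - β * (betaC (h i) * (n i : ℝ)) := by
          intro i
          by_cases hi : i = 0
          · subst hi; simp only [hc, if_pos rfl, eq_self_iff_true, if_true]; ring
          · simp only [hc, if_neg hi]; ring
        rw [Finset.sum_congr rfl fun i _ => e1 i, Finset.sum_sub_distrib, ← Finset.mul_sum,
          Finset.sum_ite_eq' Finset.univ (0 : Fin (k' + 1))]
        simp only [Finset.mem_univ, if_true]
        ring
      rw [h1, h2, Real.exp_add]
      exact ENNReal.ofReal_le_ofReal
        (mul_le_mul_of_nonneg_left (key n) (Real.exp_nonneg _))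
    have hfac : ∀ i, ENNReal.ofReal ((1 - Real.exp (c i))⁻¹)
        = (1 - ENNReal.ofReal (Real.exp (c i)))⁻¹ := by
      intro i
      rw [ENNReal.ofReal_inv_of_pos (hsub i), ENNReal.ofReal_sub _ (Real.exp_nonneg _),
        ENNReal.ofReal_one]
    calc ENNReal.ofReal
          ((1 - Real.exp ((1 - β) * betaC (h 0)))⁻¹ *
            ∏ i ∈ Finset.univ.erase (0 : Fin (k' + 1)),
              (1 - Real.exp (-(β * betaC (h i))))⁻¹)
        = ∏ i, (1 - ENNReal.ofReal (Real.exp (c i)))⁻¹ := by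
          have hs0 : (0:ℝ) ≤ (1 - Real.exp ((1 - β) * betaC (h 0)))⁻¹ := by
            have := hsub 0
            simp only [hc, if_pos rfl] at this
            exact inv_nonneg.2 this.le
          rw [ENNReal.ofReal_mul hs0,
            ENNReal.ofReal_prod_of_nonneg (fun i hi => by
              have := hsub i
              simp only [hc, if_neg (Finset.ne_of_mem_erase hi)] at this
              exact inv_nonneg.2 this.le),
            ← Finset.mul_prod_erase Finset.univ _ (Finset.mem_univ (0 : Fin (k' + 1)))]
          congr 1
          · rw [← hfac 0]; simp only [hc, if_pos rfl]
          · refine Finset.prod_congr rfl fun i hi => ?_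
            rw [← hfac i]
            simp only [hc, if_neg (Finset.ne_of_mem_erase hi)]
      _ = ∏ i, ∑' j : ℕ, (ENNReal.ofReal (Real.exp (c i))) ^ j := by
          refine Finset.prod_congr rfl fun i _ => ?_
          rw [ENNReal.tsum_geometric]
      _ = ∑' n : Fin (k' + 1) → ℕ, ∏ i, (ENNReal.ofReal (Real.exp (c i))) ^ (n i) :=
          (tsum_pi_prod _).symm
      _ ≤ _ := ENNReal.tsum_le_tsum hterm
  refine ⟨main, ?_⟩
  have hFtop : Tendsto
      (fun β : ℝ => (1 - Real.exp ((1 - β) * betaC (h 0)))⁻¹ *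
        ∏ i ∈ Finset.univ.erase (0 : Fin (k' + 1)),
          (1 - Real.exp (-(β * betaC (h i))))⁻¹)
      (nhdsWithin 1 (Set.Ioi 1)) atTop := by
    have hP : Tendsto
        (fun β : ℝ => ∏ i ∈ Finset.univ.erase (0 : Fin (k' + 1)),
          (1 - Real.exp (-(β * betaC (h i))))⁻¹)
        (nhdsWithin 1 (Set.Ioi 1))
        (nhds (∏ i ∈ Finset.univ.erase (0 : Fin (k' + 1)),
          (1 - Real.exp (-(betaC (h i))))⁻¹)) := by
      apply tendsto_finset_prod
      intro i _
      apply Filter.Tendsto.inv₀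
      · have hcont : Continuous fun β : ℝ => 1 - Real.exp (-(β * betaC (h i))) :=
          continuous_const.sub (Real.continuous_exp.comp ((continuous_id.mul continuous_const).neg))
        have ht : Tendsto (fun β : ℝ => 1 - Real.exp (-(β * betaC (h i))))
            (nhdsWithin 1 (Set.Ioi 1)) (nhds (1 - Real.exp (-(1 * betaC (h i))))) :=
          (hcont.tendsto 1).mono_left nhdsWithin_le_nhds
        simpa using ht
      · have : Real.exp (-(betaC (h i))) < 1 := Real.exp_lt_one_iff.2 (by linarith [hpos i])
        intro hzero
        have := sub_eq_zero.1 hzero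
        linarith
    have hPpos : 0 < ∏ i ∈ Finset.univ.erase (0 : Fin (k' + 1)),
        (1 - Real.exp (-(betaC (h i))))⁻¹ := by
      apply Finset.prod_pos
      intro i _
      have : Real.exp (-(betaC (h i))) < 1 := Real.exp_lt_one_iff.2 (by linarith [hpos i])
      exact inv_pos.2 (by linarith)
    have hA : Tendsto (fun β : ℝ => (1 - Real.exp ((1 - β) * betaC (h 0)))⁻¹)
        (nhdsWithin 1 (Set.Ioi 1)) atTop := by
      have h0 : Tendsto (fun β : ℝ => 1 - Real.exp ((1 - β) * betaC (h 0)))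
          (nhdsWithin 1 (Set.Ioi 1)) (nhdsWithin 0 (Set.Ioi 0)) := by
        rw [tendsto_nhdsWithin_iff]
        constructor
        · have hcont : Continuous fun β : ℝ => 1 - Real.exp ((1 - β) * betaC (h 0)) :=
            continuous_const.sub
              (Real.continuous_exp.comp ((continuous_const.sub continuous_id).mul continuous_const))
          have ht : Tendsto (fun β : ℝ => 1 - Real.exp ((1 - β) * betaC (h 0)))
              (nhdsWithin 1 (Set.Ioi 1)) (nhds (1 - Real.exp ((1 - 1) * betaC (h 0)))) :=
            (hcont.tendsto 1).mono_left nhdsWithin_le_nhds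
          simpa using ht
        · filter_upwards [self_mem_nhdsWithin] with β hβ
          have hβ1 : (1 : ℝ) < β := hβ
          have : (1 - β) * betaC (h 0) < 0 :=
            mul_neg_of_neg_of_pos (by linarith) (hpos 0)
          have := Real.exp_lt_one_iff.2 this
          exact Set.mem_Ioi.2 (by linarith)
      exact h0.inv_tendsto_nhdsGT_zero
    exact hA.atTop_mul_pos hPpos hP
  have htop := ENNReal.tendsto_ofReal_atTop.comp hFtop
  apply tendsto_nhds_top_mono htop
  filter_upwards [self_mem_nhdsWithin] with β hβ
  exact main β hβ
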